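/- Let Z be a real n×p matrix such that ZᵀZ is positive definite, let S be the positive semidefinite square root of ZᵀZ, and set Q₀ := Z S⁻¹. Then for every real n×p matrix Q with QᵀQ = I, one has ‖Z − Q₀‖_F ≤ ‖Z − Q‖_F. That is, the polar factor Z(ZᵀZ)^{-1/2} is a minimizer of ‖Z − Q‖_F over the Stiefel manifold. -/

import Mathlib

open Matrix

/-- The Frobenius norm of a real matrix, `‖A‖_F = sqrt (trace (Aᵀ A))`. -/
noncomputable def frobNorm {n p : ℕ} (A : Matrix (Fin n) (Fin p) ℝ) : ℝ :=
  Real.sqrt ((Aᵀ * A).trace)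

/-- The positive semidefinite square root of a positive semidefinite matrix, as
`Matrix.PosSemidef.sqrt` was defined in Mathlib of December 2024 (since removed). -/
noncomputable def Matrix.PosSemidef.sqrt {n : Type*} [Fintype n] [DecidableEq n]
    {A : Matrix n n ℝ} (hA : A.PosSemidef) : Matrix n n ℝ :=
  (hA.1.eigenvectorUnitary : Matrix n n ℝ) * diagonal (Real.sqrt ∘ hA.1.eigenvalues) *
    (star hA.1.eigenvectorUnitary : Matrix n n ℝ)

lemma Matrix.PosSemidef.posSemidef_sqrt {n : Type*} [Fintype n] [DecidableEq n]
    {A : Matrix n n ℝ} (hA : A.PosSemidef) : hA.sqrt.PosSemidef := by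
  unfold Matrix.PosSemidef.sqrt
  have h := (posSemidef_diagonal_iff.mpr fun i => Real.sqrt_nonneg (hA.1.eigenvalues i)
    : (diagonal (Real.sqrt ∘ hA.1.eigenvalues)).PosSemidef).mul_mul_conjTranspose_same
    (hA.1.eigenvectorUnitary : Matrix n n ℝ)
  simpa [Matrix.star_eq_conjTranspose] using h

lemma Matrix.PosSemidef.sqrt_mul_self {n : Type*} [Fintype n] [DecidableEq n]
    {A : Matrix n n ℝ} (hA : A.PosSemidef) : hA.sqrt * hA.sqrt = A := by
  unfold Matrix.PosSemidef.sqrt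
  set U : Matrix n n ℝ := (hA.1.eigenvectorUnitary : Matrix n n ℝ) with hU
  have hUU : (star hA.1.eigenvectorUnitary : Matrix n n ℝ) * U = 1 :=
    Unitary.coe_star_mul_self _
  calc U * diagonal (Real.sqrt ∘ hA.1.eigenvalues) *
        (star hA.1.eigenvectorUnitary : Matrix n n ℝ) *
        (U * diagonal (Real.sqrt ∘ hA.1.eigenvalues) *
        (star hA.1.eigenvectorUnitary : Matrix n n ℝ))
      = U * (diagonal (Real.sqrt ∘ hA.1.eigenvalues) * diagonal (Real.sqrt ∘ hA.1.eigenvalues))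
        * (star hA.1.eigenvectorUnitary : Matrix n n ℝ) := by
        simp only [Matrix.mul_assoc]
        rw [← Matrix.mul_assoc _ U, hUU, Matrix.one_mul]
    _ = A := by
        rw [diagonal_mul_diagonal]
        conv_rhs => rw [hA.1.spectral_theorem]
        rw [Unitary.conjStarAlgAut_apply]
        congr 2
        ext i j
        by_cases h : i = j
        · subst h
          simp [Real.mul_self_sqrt (hA.eigenvalues_nonneg i)]
        · simp [diagonal_apply_ne _ h]

lemma trace_nonneg_of_posSemidef {m : ℕ} {M : Matrix (Fin m) (Fin m) ℝ}
    (hM : M.PosSemidef) : 0 ≤ M.trace := by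
  rw [Matrix.trace]
  refine Finset.sum_nonneg fun i _ => ?_
  exact hM.diag_nonneg

lemma trace_mul_psd_nonneg {n p : ℕ} (A : Matrix (Fin n) (Fin p) ℝ)
    {S : Matrix (Fin p) (Fin p) ℝ} (hS : S.PosSemidef) :
    0 ≤ (Aᵀ * A * S).trace := by
  set T := hS.sqrt with hT
  have hTT : T * T = S := hS.sqrt_mul_self
  have hTsymm : Tᵀ = T := by
    have := hS.posSemidef_sqrt.1
    simpa [Matrix.IsHermitian] using this
  have key : (Aᵀ * A * S).trace = ((A * T)ᵀ * (A * T)).trace := by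
    rw [transpose_mul, hTsymm, ← hTT]
    rw [show Aᵀ * A * (T * T) = (Aᵀ * A * T) * T by noncomm_ring,
      trace_mul_comm]
    simp [Matrix.mul_assoc]
  rw [key]
  have : ((A * T)ᵀ * (A * T)).PosSemidef := by
    have := Matrix.posSemidef_conjTranspose_mul_self (A * T)
    simpa using this
  exact trace_nonneg_of_posSemidef this

/-- If `Zᵀ Z` is positive definite with positive semidefinite square root
`S`, and `Q₀ = Z S⁻¹`, then for every `Q` with `Qᵀ Q = I` one has
`‖Z - Q₀‖_F ≤ ‖Z - Q‖_F`: the polar factor minimizes the Frobenius distance to `Z`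
over the Stiefel manifold. -/
theorem polar_factor_minimizes_frobenius_distance
    (n p : ℕ) (Z : Matrix (Fin n) (Fin p) ℝ)
    (hZ : (Zᵀ * Z).PosDef) :
    ∀ Q : Matrix (Fin n) (Fin p) ℝ, Qᵀ * Q = 1 →
      frobNorm (Z - Z * (hZ.posSemidef.sqrt)⁻¹) ≤ frobNorm (Z - Q) := by
  intro Q hQ
  set S := hZ.posSemidef.sqrt with hSdef
  have hS : S.PosSemidef := hZ.posSemidef.posSemidef_sqrt
  have hSS : S * S = Zᵀ * Z := hZ.posSemidef.sqrt_mul_self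
  have hSt : Sᵀ = S := by
    have := hS.1; simpa [Matrix.IsHermitian] using this
  have hdet : IsUnit S.det := by
    rw [isUnit_iff_ne_zero]
    intro h0
    have : (Zᵀ * Z).det = 0 := by rw [← hSS, det_mul, h0, mul_zero]
    exact hZ.det_pos.ne' this
  have hSinv : S * S⁻¹ = 1 := mul_nonsing_inv S hdet
  have hinvS : S⁻¹ * S = 1 := nonsing_inv_mul S hdet
  set Q₀ := Z * S⁻¹ with hQ₀def
  have hQ₀S : Q₀ * S = Z := by
    rw [hQ₀def, Matrix.mul_assoc, hinvS, Matrix.mul_one]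
  have hinvT : S⁻¹ᵀ = S⁻¹ := by rw [transpose_nonsing_inv, hSt]
  have hQ₀tZ : Q₀ᵀ * Z = S := by
    rw [hQ₀def, transpose_mul, hinvT, Matrix.mul_assoc, ← hSS,
      ← Matrix.mul_assoc, hinvS, Matrix.one_mul]
  have hQ₀Q₀ : Q₀ᵀ * Q₀ = 1 := by
    rw [hQ₀def, ← Matrix.mul_assoc, hQ₀tZ, hSinv]
  -- trace identities
  have htZQ : (Zᵀ * Q).trace = (Qᵀ * Z).trace := by
    rw [← trace_transpose (Zᵀ * Q), transpose_mul, transpose_transpose]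
  have htZQ₀ : (Zᵀ * Q₀).trace = S.trace := by
    rw [← trace_transpose (Zᵀ * Q₀), transpose_mul, transpose_transpose, hQ₀tZ]
  -- key inequality : trace (Qᵀ Z) ≤ trace S
  have hkey : (Qᵀ * Z).trace ≤ S.trace := by
    have h0 := trace_mul_psd_nonneg (Q - Q₀) hS
    have hexp : (Q - Q₀)ᵀ * (Q - Q₀) * S
        = S + S - Qᵀ * Q₀ * S - Q₀ᵀ * Q * S := by
      rw [transpose_sub, Matrix.sub_mul, Matrix.mul_sub, Matrix.mul_sub,
        hQ, hQ₀Q₀]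
      noncomm_ring
    have h1 : (Qᵀ * Q₀ * S).trace = (Qᵀ * Z).trace := by
      rw [Matrix.mul_assoc, hQ₀S]
    have h2 : (Q₀ᵀ * Q * S).trace = (Qᵀ * Z).trace := by
      rw [← trace_transpose (Q₀ᵀ * Q * S), transpose_mul, transpose_mul,
        transpose_transpose, hSt, trace_mul_comm, Matrix.mul_assoc, hQ₀S]
    rw [hexp] at h0
    simp only [trace_sub, trace_add, h1, h2] at h0
    linarith
  -- expand both squared norms
  have e1 : ((Z - Q)ᵀ * (Z - Q)).trace
      = (Zᵀ * Z).trace + (Qᵀ * Q).trace - 2 * (Qᵀ * Z).trace := by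
    rw [transpose_sub, Matrix.sub_mul, Matrix.mul_sub, Matrix.mul_sub]
    simp only [trace_sub]
    rw [htZQ]; ring
  have e0 : ((Z - Q₀)ᵀ * (Z - Q₀)).trace
      = (Zᵀ * Z).trace + (Q₀ᵀ * Q₀).trace - 2 * S.trace := by
    rw [transpose_sub, Matrix.sub_mul, Matrix.mul_sub, Matrix.mul_sub]
    simp only [trace_sub]
    rw [htZQ₀, hQ₀tZ]; ring
  have hle : ((Z - Q₀)ᵀ * (Z - Q₀)).trace ≤ ((Z - Q)ᵀ * (Z - Q)).trace := by
    rw [e0, e1, hQ, hQ₀Q₀]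
    linarith
  exact Real.sqrt_le_sqrt hle
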